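/- For every signed permutation π ∈ B_n, with the interleaved decomposition ψ(π) = (π_1, …, π_k) into standardized subsequences (π_i = std γ_{n,k}^i(π)), the width-k type-B descent number decomposes as des_k^B(π) = des^B(π_k) + Σ_{i=1}^{k-1} des^A(π_i). -/

import Mathlib

open Finset

/-- The value function of the signed permutation determined by `σ` and sign vector `ε`:
`bval n σ ε i` is `π(i)` for `i ∈ {-n,…,n}`, with `π(0) = 0` and `π(-i) = -π(i)`. -/
def bval (n : ℕ) (σ : Equiv.Perm (Fin n)) (ε : Fin n → Bool) : ℤ → ℤ := fun i =>
  if h : 1 ≤ i.natAbs ∧ i.natAbs ≤ n then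
    (Int.sign i) *
      (if ε ⟨i.natAbs - 1, by omega⟩ then -((((σ ⟨i.natAbs - 1, by omega⟩ : Fin n) : ℕ) : ℤ) + 1)
       else (((σ ⟨i.natAbs - 1, by omega⟩ : Fin n) : ℕ) : ℤ) + 1)
  else 0

/-- width-`k` type-B descent number: `#{0 ≤ i ≤ n-k : π(i) > π(i+k)}`, `π(0)=0`. -/
def desB (n k : ℕ) (π : ℤ → ℤ) : ℕ :=
  ((range (n - k + 1)).filter fun i : ℕ => π i > π ((i : ℤ) + k)).card

/-- width-`k` type-A descent number: `#{1 ≤ i ≤ n-k : π(i) > π(i+k)}`. -/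
def desA (n k : ℕ) (π : ℤ → ℤ) : ℕ :=
  ((Icc 1 (n - k)).filter fun i : ℕ => π i > π ((i : ℤ) + k)).card

/-- width-`k` negative descent number: `#{1 ≤ i ≤ n-k : π(-i) > π(i+k)}`. -/
def ndesB (n k : ℕ) (π : ℤ → ℤ) : ℕ :=
  ((Icc 1 (n - k)).filter fun i : ℕ => π (-(i : ℤ)) > π ((i : ℤ) + k)).card

/-- width-`k` inversion number: pairs `i < j` in `[n]` with `j - i` a positive multiple of `k`
and `π(i) > π(j)`. -/
def invAk (n k : ℕ) (π : ℤ → ℤ) : ℕ :=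
  (((Icc 1 n) ×ˢ (Icc 1 n)).filter fun p : ℕ × ℕ =>
    p.1 < p.2 ∧ k ∣ (p.2 - p.1) ∧ π p.1 > π p.2).card

/-- width-`k` negative-entry statistic: `#{1 ≤ i ≤ ⌊n/k⌋ : π(ik) < 0}`. -/
def negk (n k : ℕ) (π : ℤ → ℤ) : ℕ :=
  ((Icc 1 (n / k)).filter fun i : ℕ => π ((i : ℤ) * k) < 0).card

/-- width-`k` negative-sum-pair statistic. -/
def nspk (n k : ℕ) (π : ℤ → ℤ) : ℕ :=
  (((Icc 1 n) ×ˢ (Icc 1 n)).filter fun p : ℕ × ℕ =>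
    p.1 < p.2 ∧ k ∣ (p.2 - p.1) ∧ π p.1 + π p.2 < 0).card

/-- width-`k` type-B inversion number. -/
def invBk (n k : ℕ) (π : ℤ → ℤ) : ℕ := invAk n k π + negk n k π + nspk n k π

/-- Length of the `i`-th interleaved subsequence (positions `i, i+k, …` in `[n]`). -/
def subLen (n k i : ℕ) : ℕ := (n - i) / k + 1

/-- The standardization `std γ_{n,k}^i(π)` of the `i`-th interleaved subsequence of `π`,
as a value function: the `m`-th entry (for `1 ≤ m ≤ subLen n k i`) is the sign of
`π(i + (m-1)k)` times the rank of its absolute value among the subsequence. -/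
def stdSub (n k i : ℕ) (π : ℤ → ℤ) : ℤ → ℤ := fun m =>
  if 1 ≤ m ∧ m ≤ (subLen n k i : ℤ) then
    (π ((i : ℤ) + (m - 1) * k)).sign *
      (1 + (((Finset.Icc 1 (subLen n k i)).filter fun m' : ℕ =>
        |π ((i : ℤ) + ((m' : ℤ) - 1) * k)| < |π ((i : ℤ) + (m - 1) * k)|).card : ℤ))
  else 0

section Aux

variable {n k : ℕ} {σ : Equiv.Perm (Fin n)} {ε : Fin n → Bool}

lemma bval_zero : bval n σ ε ((0:ℕ):ℤ) = 0 := by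
  simp [bval]

lemma bval_eq (p : ℕ) (h1 : 1 ≤ p) (h2 : p ≤ n) :
    bval n σ ε (p:ℤ) =
      (if ε ⟨p - 1, by omega⟩ then -((((σ ⟨p - 1, by omega⟩ : Fin n) : ℕ) : ℤ) + 1)
       else (((σ ⟨p - 1, by omega⟩ : Fin n) : ℕ) : ℤ) + 1) := by
  have hs : Int.sign (p:ℤ) = 1 := Int.sign_eq_one_of_pos (by exact_mod_cast h1)
  simp only [bval, Int.natAbs_natCast]
  rw [dif_pos ⟨h1, h2⟩, hs, one_mul]

lemma bval_ne (p : ℕ) (h1 : 1 ≤ p) (h2 : p ≤ n) : bval n σ ε (p:ℤ) ≠ 0 := by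
  rw [bval_eq p h1 h2]
  split <;> intro h <;> omega

lemma sign_mul_cmp (a b ra rb : ℤ) (ha : a ≠ 0) (hb : b ≠ 0)
    (hra : 0 < ra) (hrb : 0 < rb)
    (h1 : |a| < |b| ↔ ra < rb) (h2 : |b| < |a| ↔ rb < ra) :
    a.sign * ra > b.sign * rb ↔ a > b := by
  rcases ha.lt_or_gt with ha' | ha' <;> rcases hb.lt_or_gt with hb' | hb'
  · rw [Int.sign_eq_neg_one_of_neg ha', Int.sign_eq_neg_one_of_neg hb']
    rw [abs_of_neg ha', abs_of_neg hb'] at h1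
    constructor <;> intro h <;> omega
  · rw [Int.sign_eq_neg_one_of_neg ha', Int.sign_eq_one_of_pos hb']
    constructor <;> intro h <;> omega
  · rw [Int.sign_eq_one_of_pos ha', Int.sign_eq_neg_one_of_neg hb']
    constructor <;> intro h <;> omega
  · rw [Int.sign_eq_one_of_pos ha', Int.sign_eq_one_of_pos hb']
    rw [abs_of_pos ha', abs_of_pos hb'] at h2
    constructor <;> intro h <;> omega

lemma sign_neg_iff (v c : ℤ) (hc : 0 ≤ c) : 0 > v.sign * (1 + c) ↔ v < 0 := by
  rcases lt_trichotomy v 0 with h | h | h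
  · rw [Int.sign_eq_neg_one_of_neg h]
    constructor
    · intro _; exact h
    · intro _; linarith
  · subst h
    simp
  · rw [Int.sign_eq_one_of_pos h]
    constructor <;> intro hh <;> linarith

lemma pos_le (r m : ℕ) (hr1 : 1 ≤ r) (hrk : r ≤ k) (hkn : k ≤ n)
    (hm1 : 1 ≤ m) (hm2 : m ≤ subLen n k r) :
    1 ≤ r + (m-1)*k ∧ r + (m-1)*k ≤ n := by
  refine ⟨by omega, ?_⟩
  have h1 : m - 1 ≤ (n - r)/k := by unfold subLen at hm2; omega
  have h2 : (m-1)*k ≤ ((n-r)/k)*k := Nat.mul_le_mul_right k h1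
  have h3 : ((n-r)/k)*k ≤ n - r := Nat.div_mul_le_self _ _
  omega

lemma pos_cast (r m : ℕ) (hm1 : 1 ≤ m) :
    (r:ℤ) + ((m:ℤ) - 1) * (k:ℤ) = ((r + (m-1)*k : ℕ) : ℤ) := by
  have h : ((m - 1 : ℕ) : ℤ) = (m:ℤ) - 1 := by omega
  push_cast [h]
  ring

lemma stdSub_eq_of_mem (r m : ℕ) (hm1 : 1 ≤ m) (hm2 : m ≤ subLen n k r) :
    stdSub n k r (bval n σ ε) (m:ℤ) =
      (bval n σ ε ((r:ℤ) + ((m:ℤ)-1)*k)).sign *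
        (1 + (((Icc 1 (subLen n k r)).filter fun m' : ℕ =>
          |bval n σ ε ((r:ℤ) + ((m':ℤ) - 1) * k)| < |bval n σ ε ((r:ℤ) + ((m:ℤ)-1)*k)|).card : ℤ)) := by
  unfold stdSub
  rw [if_pos ⟨by exact_mod_cast hm1, by exact_mod_cast hm2⟩]

lemma rank_lt (r m m' : ℕ) (hm1 : 1 ≤ m) (hm2 : m ≤ subLen n k r)
    (h : |bval n σ ε ((r:ℤ) + ((m:ℤ)-1)*k)| < |bval n σ ε ((r:ℤ) + ((m':ℤ)-1)*k)|) :
    ((Icc 1 (subLen n k r)).filter fun j : ℕ =>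
      |bval n σ ε ((r:ℤ)+((j:ℤ)-1)*k)| < |bval n σ ε ((r:ℤ)+((m:ℤ)-1)*k)|).card <
    ((Icc 1 (subLen n k r)).filter fun j : ℕ =>
      |bval n σ ε ((r:ℤ)+((j:ℤ)-1)*k)| < |bval n σ ε ((r:ℤ)+((m':ℤ)-1)*k)|).card := by
  apply Finset.card_lt_card
  rw [Finset.ssubset_iff_of_subset]
  · exact ⟨m, Finset.mem_filter.2 ⟨Finset.mem_Icc.2 ⟨hm1, hm2⟩, h⟩,
      fun hmem => lt_irrefl _ (Finset.mem_filter.1 hmem).2⟩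
  · exact Finset.monotone_filter_right _ (fun j _ hjlt => lt_trans hjlt h)

lemma rank_lt_iff (r m m' : ℕ) (hm1 : 1 ≤ m) (hm2 : m ≤ subLen n k r)
    (hm'1 : 1 ≤ m') (hm'2 : m' ≤ subLen n k r) :
    |bval n σ ε ((r:ℤ) + ((m:ℤ)-1)*k)| < |bval n σ ε ((r:ℤ) + ((m':ℤ)-1)*k)| ↔
    ((Icc 1 (subLen n k r)).filter fun j : ℕ =>
      |bval n σ ε ((r:ℤ)+((j:ℤ)-1)*k)| < |bval n σ ε ((r:ℤ)+((m:ℤ)-1)*k)|).card <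
    ((Icc 1 (subLen n k r)).filter fun j : ℕ =>
      |bval n σ ε ((r:ℤ)+((j:ℤ)-1)*k)| < |bval n σ ε ((r:ℤ)+((m':ℤ)-1)*k)|).card := by
  constructor
  · exact rank_lt r m m' hm1 hm2
  · intro hc
    rcases lt_trichotomy (|bval n σ ε ((r:ℤ) + ((m:ℤ)-1)*k)|)
        (|bval n σ ε ((r:ℤ) + ((m':ℤ)-1)*k)|) with h | h | h
    · exact h
    · exfalso; rw [h] at hc; exact lt_irrefl _ hc
    · exact absurd (rank_lt r m' m hm'1 hm'2 h) (by omega)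

lemma stdSub_gt_iff (r m m' : ℕ) (hr1 : 1 ≤ r) (hrk : r ≤ k) (hkn : k ≤ n)
    (hm1 : 1 ≤ m) (hm2 : m ≤ subLen n k r) (hm'1 : 1 ≤ m') (hm'2 : m' ≤ subLen n k r) :
    stdSub n k r (bval n σ ε) (m:ℤ) > stdSub n k r (bval n σ ε) (m':ℤ) ↔
    bval n σ ε ((r:ℤ)+((m:ℤ)-1)*k) > bval n σ ε ((r:ℤ)+((m':ℤ)-1)*k) := by
  rw [stdSub_eq_of_mem r m hm1 hm2, stdSub_eq_of_mem r m' hm'1 hm'2]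
  have hne : bval n σ ε ((r:ℤ)+((m:ℤ)-1)*k) ≠ 0 := by
    rw [pos_cast r m hm1]
    exact bval_ne _ (pos_le r m hr1 hrk hkn hm1 hm2).1 (pos_le r m hr1 hrk hkn hm1 hm2).2
  have hne' : bval n σ ε ((r:ℤ)+((m':ℤ)-1)*k) ≠ 0 := by
    rw [pos_cast r m' hm'1]
    exact bval_ne _ (pos_le r m' hr1 hrk hkn hm'1 hm'2).1 (pos_le r m' hr1 hrk hkn hm'1 hm'2).2
  apply sign_mul_cmp _ _ _ _ hne hne' (by positivity) (by positivity)
  · rw [rank_lt_iff r m m' hm1 hm2 hm'1 hm'2]; omega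
  · rw [rank_lt_iff r m' m hm'1 hm'2 hm1 hm2]; omega

lemma card_insert_split (N : ℕ) (p : ℕ → Prop) [DecidablePred p] :
    ((range (N+1)).filter p).card = (if p 0 then 1 else 0) + ((Icc 1 N).filter p).card := by
  have hr : range (N+1) = insert 0 (Icc 1 N) := by
    ext x; simp [Nat.lt_succ_iff]; omega
  rw [hr, filter_insert]
  split_ifs with h
  · rw [card_insert_of_notMem (by simp)]; omega
  · omega

lemma count_split (hk : 1 ≤ k) (hkn : k ≤ n) (P : ℕ → Prop) [DecidablePred P] :
    ((Icc 1 (n-k)).filter (fun i => P i)).card =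
      ∑ r ∈ Icc 1 k, ((Icc 1 ((n-r)/k)).filter (fun m => P (r + (m-1)*k))).card := by
  have hset : (Icc 1 (n-k)).filter (fun i => P i) =
      (Icc 1 k).biUnion (fun r =>
        ((Icc 1 ((n-r)/k)).filter (fun m => P (r + (m-1)*k))).image (fun m => r + (m-1)*k)) := by
    ext i
    simp only [mem_filter, mem_Icc, mem_biUnion, mem_image]
    constructor
    · rintro ⟨⟨h1, h2⟩, hP⟩
      obtain ⟨q, s, hdm, hlt⟩ : ∃ q s, k * q + s = i - 1 ∧ s < k :=
        ⟨(i-1)/k, (i-1)%k, Nat.div_add_mod (i-1) k, Nat.mod_lt _ (by omega)⟩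
      have hik : i + k ≤ n := by omega
      have hmul : (q+1)*k = k*q + k := by ring
      refine ⟨s+1, ⟨by omega, by omega⟩, q+1, ⟨⟨by omega, ?_⟩, ?_⟩, ?_⟩
      · rw [Nat.le_div_iff_mul_le (by omega : 0 < k)]
        omega
      · have he : s + 1 + ((q+1)-1)*k = i := by
          have h4 : ((q+1)-1)*k = k*q := by simp; ring
          rw [h4]; omega
        rw [he]; exact hP
      · have h4 : ((q+1)-1)*k = k*q := by simp; ring
        rw [h4]; omega
    · rintro ⟨r, ⟨hr1, hrk⟩, m, ⟨⟨hm1, hm2⟩, hP⟩, heq⟩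
      have hmk : m * k ≤ n - r := (Nat.le_div_iff_mul_le (by omega : 0 < k)).mp hm2
      have h5 : (m-1)*k + k = m*k := by
        have h7 : (m-1+1)*k = (m-1)*k + k := by ring
        have h6 : m - 1 + 1 = m := by omega
        rw [h6] at h7; omega
      exact ⟨⟨by omega, by omega⟩, heq ▸ hP⟩
  rw [hset, Finset.card_biUnion, Finset.sum_congr rfl]
  · intro r _
    rw [Finset.card_image_of_injOn]
    intro a ha b hb hab
    simp only [coe_filter, Set.mem_setOf_eq, mem_Icc] at ha hb
    have hab' : r + (a-1)*k = r + (b-1)*k := hab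
    have h8 : (a-1)*k = (b-1)*k := by omega
    have := Nat.eq_of_mul_eq_mul_right (by omega : 0 < k) h8
    omega
  · intro r hr r' hr' hne
    simp only [Finset.mem_coe, mem_Icc] at hr hr'
    rw [Function.onFun, Finset.disjoint_left]
    rintro x hx hx'
    simp only [mem_image, mem_filter, mem_Icc] at hx hx'
    obtain ⟨m, _, hm⟩ := hx
    obtain ⟨m', _, hm'⟩ := hx'
    have hmod : r % k = r' % k := by
      rw [← Nat.add_mul_mod_self_right r (m-1) k, ← Nat.add_mul_mod_self_right r' (m'-1) k,
        hm, hm']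
    rcases eq_or_lt_of_le hr.2 with h | h <;> rcases eq_or_lt_of_le hr'.2 with h' | h'
    · exact hne (h.trans h'.symm)
    · rw [h, Nat.mod_self, Nat.mod_eq_of_lt h'] at hmod; omega
    · rw [h', Nat.mod_self, Nat.mod_eq_of_lt h] at hmod; omega
    · rw [Nat.mod_eq_of_lt h, Nat.mod_eq_of_lt h'] at hmod; exact hne hmod

lemma T_eq_C (hk : 1 ≤ k) (hkn : k ≤ n) (r : ℕ) (hr1 : 1 ≤ r) (hrk : r ≤ k) :
    ((Icc 1 (subLen n k r - 1)).filter fun m : ℕ =>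
        stdSub n k r (bval n σ ε) (m:ℤ) > stdSub n k r (bval n σ ε) ((m:ℤ) + ((1:ℕ):ℤ))).card =
    ((Icc 1 ((n-r)/k)).filter fun m : ℕ =>
        bval n σ ε ((r + (m-1)*k : ℕ):ℤ) >
          bval n σ ε (((r + (m-1)*k : ℕ):ℤ) + (k:ℤ))).card := by
  have hL : subLen n k r - 1 = (n-r)/k := by simp [subLen]
  rw [hL]
  apply congrArg
  apply Finset.filter_congr
  intro m hm
  simp only [mem_Icc] at hm
  have hm1 : 1 ≤ m := hm.1
  have ht : subLen n k r = (n-r)/k + 1 := rfl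
  have hm2 : m ≤ subLen n k r := by omega
  have hm'2 : m + 1 ≤ subLen n k r := by omega
  have hcast : ((m:ℤ) + ((1:ℕ):ℤ)) = ((m+1 : ℕ):ℤ) := by push_cast; ring
  rw [hcast, stdSub_gt_iff r m (m+1) hr1 hrk hkn hm1 hm2 (by omega) hm'2]
  have h2 : ((r:ℤ) + (((m+1:ℕ):ℤ) - 1)*(k:ℤ)) = ((r + (m-1)*k : ℕ):ℤ) + (k:ℤ) := by
    rw [← pos_cast r m hm1]; push_cast; ring
  rw [h2, pos_cast r m hm1]

end Aux

/-- decomposition of the width-`k` type-B descent number along the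
standardized interleaved subsequences:
`des_k^B(π) = des^B(π_k) + Σ_{i=1}^{k-1} des^A(π_i)`. -/
theorem stmt18 (n k : ℕ) (hk : 1 ≤ k) (hkn : k ≤ n)
    (σ : Equiv.Perm (Fin n)) (ε : Fin n → Bool) :
    desB n k (bval n σ ε) =
      desB (subLen n k k) 1 (stdSub n k k (bval n σ ε)) +
        ∑ i ∈ Finset.Icc 1 (k - 1),
          desA (subLen n k i) 1 (stdSub n k i (bval n σ ε)) := by
  have hLk : 1 ≤ subLen n k k := Nat.le_add_left 1 _
  have h0L : (bval n σ ε ((0:ℕ):ℤ) > bval n σ ε (((0:ℕ):ℤ) + (k:ℤ))) ↔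
      bval n σ ε (k:ℤ) < 0 := by
    rw [bval_zero]; norm_num
  have h0R : (stdSub n k k (bval n σ ε) ((0:ℕ):ℤ) >
      stdSub n k k (bval n σ ε) (((0:ℕ):ℤ) + ((1:ℕ):ℤ))) ↔ bval n σ ε (k:ℤ) < 0 := by
    have e1 : stdSub n k k (bval n σ ε) ((0:ℕ):ℤ) = 0 := by
      simp [stdSub]
    have hc : (((0:ℕ):ℤ) + ((1:ℕ):ℤ)) = (((1:ℕ):ℕ):ℤ) := by norm_num
    rw [e1, hc, stdSub_eq_of_mem k 1 le_rfl hLk]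
    have hv : ((k:ℤ) + (((1:ℕ):ℤ) - 1) * (k:ℤ)) = (k:ℤ) := by push_cast; ring
    rw [hv]
    exact sign_neg_iff _ _ (by positivity)
  unfold desB desA
  rw [card_insert_split (n-k), card_insert_split (subLen n k k - 1)]
  simp only [h0L, h0R]
  have hsum : ((Icc 1 (n-k)).filter fun i : ℕ =>
      bval n σ ε (i:ℤ) > bval n σ ε ((i:ℤ) + (k:ℤ))).card =
      ∑ r ∈ Icc 1 k, ((Icc 1 (subLen n k r - 1)).filter fun m : ℕ =>
        stdSub n k r (bval n σ ε) (m:ℤ) >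
          stdSub n k r (bval n σ ε) ((m:ℤ) + ((1:ℕ):ℤ))).card := by
    rw [count_split hk hkn (fun i : ℕ => bval n σ ε (i:ℤ) > bval n σ ε ((i:ℤ) + (k:ℤ)))]
    exact Finset.sum_congr rfl fun r hr => by
      rw [T_eq_C hk hkn r (mem_Icc.1 hr).1 (mem_Icc.1 hr).2]
  have hins : Icc 1 k = insert k (Icc 1 (k-1)) := by
    ext x; simp only [mem_Icc, mem_insert]; omega
  rw [hsum, hins, Finset.sum_insert (by simp only [mem_Icc]; omega)]
  omega
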